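/- With P = P_{h,d} as defined (h ≥ 1, d ≥ 3), for each j = 1,…,h the point (u_j',2) with u_j' = e_1 + j(e_2+⋯+e_{d-1}) + (j+2)e_d does not belong to the monoid ℤ_{≥0}A_P generated by A_P = {(α,1) : α ∈ P ∩ ℤ^d}. In particular P_{h,d} is not normal. -/

import Mathlib

open Finset

noncomputable section

/-- Cast an integer lattice point to a real point. -/
def castPt {d : ℕ} (a : Fin d → ℤ) : Fin d → ℝ := fun i => (a i : ℝ)

/-- The cone of nonnegative real combinations of a set of vectors. -/
def coneOf {d : ℕ} (A : Set (Fin d → ℝ)) : Set (Fin d → ℝ) :=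
  {x | ∃ (n : ℕ) (c : Fin n → ℝ) (v : Fin n → (Fin d → ℝ)),
    (∀ i, 0 ≤ c i) ∧ (∀ i, v i ∈ A) ∧ x = ∑ i, c i • v i}

/-- `A_P = {(α,1) : α ∈ P ∩ ℤ^d} ⊂ ℤ^(d+1)`. -/
def APts {d : ℕ} (P : Set (Fin d → ℝ)) : Set (Fin (d+1) → ℤ) :=
  {b | b (Fin.last d) = 1 ∧ castPt (fun i : Fin d => b i.castSucc) ∈ P}

/-- The `k`-th standard unit vector (0-indexed coordinate `k`). -/
def eV (d : ℕ) (k : ℕ) : Fin d → ℤ := fun i => if i.val = k then 1 else 0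

/-- `e_2 + ⋯ + e_{d-1}` (coordinates with 0 < index < d-1). -/
def eMid (d : ℕ) : Fin d → ℤ := fun i => if 0 < i.val ∧ i.val < d - 1 then 1 else 0

/-- `e_d`, the last unit vector. -/
def eD (d : ℕ) : Fin d → ℤ := eV d (d - 1)

/-- `e_1`, the first unit vector. -/
def eOne (d : ℕ) : Fin d → ℤ := eV d 0

/-- The vertex set of the polytope `P_{h,d}`. -/
def PhdVerts (h d : ℕ) : Set (Fin d → ℤ) :=
  ({0, eD d, eMid d, (h : ℤ) • (eMid d + eD d), ((h : ℤ) - 1) • eMid d + (h : ℤ) • eD d,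
    (h : ℤ) • eMid d + ((h : ℤ) - 1) • eD d, eOne d + (4 : ℤ) • eD d, eOne d + (5 : ℤ) • eD d,
    eOne d + eMid d, eOne d + eMid d + eD d} : Set (Fin d → ℤ))
  ∪ {x | ∃ i : Fin d, 0 < i.val ∧ i.val < d - 1 ∧ (x = eV d i.val ∨ x = eV d i.val + eD d)}

/-- The polytope `P_{h,d} ⊂ ℝ^d`. -/
def Phd (h d : ℕ) : Set (Fin d → ℝ) := convexHull ℝ (castPt '' PhdVerts h d)

/-- Append a last coordinate to a lattice point. -/
def app {d : ℕ} (a : Fin d → ℤ) (k : ℤ) : Fin (d+1) → ℤ := Fin.snoc a k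

/-- `u_j' = e_1 + j(e_2+⋯+e_{d-1}) + (j+2)e_d`. -/
def ujp (d : ℕ) (j : ℤ) : Fin d → ℤ := eOne d + j • eMid d + (j + 2) • eD d

/-- `u_{1,j} = j(e_2+⋯+e_{d-1}+e_d)`. -/
def u1j (d : ℕ) (j : ℤ) : Fin d → ℤ := j • (eMid d + eD d)

/-- Bundled inequalities valid on `P_{h,d}` (coordinates `0`, `1`, `d-1`). -/
def Ineqs (h : ℕ) (x0 x1 xL : ℤ) : Prop :=
  0 ≤ x0 ∧ x0 ≤ 1 ∧ 4 * x0 ≤ xL + 4 * x1 ∧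
    xL + 4 * x1 + 5 * ((h : ℤ) - 1) * x0 ≤ 5 * h ∧
    xL - x1 - 4 * x0 ≤ 1 ∧ x1 - xL ≤ 1

lemma eOne_at {d m : ℕ} (p : m < d) : eOne d ⟨m, p⟩ = if m = 0 then 1 else 0 := rfl
lemma eMid_at {d m : ℕ} (p : m < d) :
    eMid d ⟨m, p⟩ = if 0 < m ∧ m < d - 1 then 1 else 0 := rfl
lemma eD_at {d m : ℕ} (p : m < d) : eD d ⟨m, p⟩ = if m = d - 1 then 1 else 0 := rfl
lemma eV_at {d k m : ℕ} (p : m < d) : eV d k ⟨m, p⟩ = if m = k then 1 else 0 := rfl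

lemma eOne0 {d : ℕ} (hd : 3 ≤ d) : eOne d ⟨0, by omega⟩ = 1 := by
  rw [eOne_at, if_pos rfl]
lemma eOne1 {d : ℕ} (hd : 3 ≤ d) : eOne d ⟨1, by omega⟩ = 0 := by
  rw [eOne_at, if_neg (by omega)]
lemma eOneL {d : ℕ} (hd : 3 ≤ d) : eOne d ⟨d - 1, by omega⟩ = 0 := by
  rw [eOne_at, if_neg (by omega)]
lemma eMid0 {d : ℕ} (hd : 3 ≤ d) : eMid d ⟨0, by omega⟩ = 0 := by
  rw [eMid_at, if_neg (by omega)]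
lemma eMid1 {d : ℕ} (hd : 3 ≤ d) : eMid d ⟨1, by omega⟩ = 1 := by
  rw [eMid_at, if_pos (by omega)]
lemma eMidL {d : ℕ} (hd : 3 ≤ d) : eMid d ⟨d - 1, by omega⟩ = 0 := by
  rw [eMid_at, if_neg (by omega)]
lemma eD0 {d : ℕ} (hd : 3 ≤ d) : eD d ⟨0, by omega⟩ = 0 := by
  rw [eD_at, if_neg (by omega)]
lemma eD1 {d : ℕ} (hd : 3 ≤ d) : eD d ⟨1, by omega⟩ = 0 := by
  rw [eD_at, if_neg (by omega)]
lemma eDL {d : ℕ} (hd : 3 ≤ d) : eD d ⟨d - 1, by omega⟩ = 1 := by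
  rw [eD_at, if_pos rfl]

lemma verts_ineqs {h d : ℕ} (hh : 1 ≤ h) (hd : 3 ≤ d) {v : Fin d → ℤ}
    (hv : v ∈ PhdVerts h d) :
    Ineqs h (v ⟨0, by omega⟩) (v ⟨1, by omega⟩) (v ⟨d - 1, by omega⟩) := by
  rcases hv with hv | ⟨i, hi1, hi2, hv | hv⟩
  · simp only [Set.mem_insert_iff, Set.mem_singleton_iff] at hv
    rcases hv with rfl|rfl|rfl|rfl|rfl|rfl|rfl|rfl|rfl|rfl <;>
    · simp only [Ineqs, Pi.add_apply, Pi.smul_apply, Pi.zero_apply, smul_eq_mul,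
        eOne0 hd, eOne1 hd, eOneL hd, eMid0 hd, eMid1 hd, eMidL hd, eD0 hd, eD1 hd, eDL hd]
      norm_num
      try omega
  · subst hv
    simp only [Ineqs, eV_at]
    split_ifs <;> omega
  · subst hv
    simp only [Ineqs, Pi.add_apply, eV_at, eD_at]
    split_ifs <;> omega

lemma hull_ineq {d : ℕ} (V : Set (Fin d → ℤ)) (p q s : Fin d) (c0 c1 c2 r : ℝ)
    (hv : ∀ v ∈ V, c0 * (v p : ℝ) + c1 * (v q : ℝ) + c2 * (v s : ℝ) ≤ r) :
    ∀ x ∈ convexHull ℝ (castPt '' V), c0 * x p + c1 * x q + c2 * x s ≤ r := by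
  intro x hx
  have hlin : IsLinearMap ℝ (fun y : Fin d → ℝ => c0 * y p + c1 * y q + c2 * y s) := by
    constructor
    · intro a b; simp only [Pi.add_apply]; ring
    · intro t a; simp only [Pi.smul_apply, smul_eq_mul]; ring
  have hconv : Convex ℝ {y : Fin d → ℝ | c0 * y p + c1 * y q + c2 * y s ≤ r} :=
    convex_halfSpace_le hlin r
  refine convexHull_min ?_ hconv hx
  rintro _ ⟨v, hvV, rfl⟩
  exact hv v hvV

lemma apts_ineqs {h d : ℕ} (hh : 1 ≤ h) (hd : 3 ≤ d) {b : Fin (d+1) → ℤ}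
    (hb : b ∈ APts (Phd h d)) :
    Ineqs h (b ⟨0, by omega⟩) (b ⟨1, by omega⟩) (b ⟨d - 1, by omega⟩) := by
  obtain ⟨-, hb2⟩ := hb
  set g : Fin d → ℤ := fun i => b i.castSucc with hg
  have e0 : b (⟨0, by omega⟩ : Fin (d+1)) = g ⟨0, by omega⟩ := rfl
  have e1 : b (⟨1, by omega⟩ : Fin (d+1)) = g ⟨1, by omega⟩ := by
    simp [hg, Fin.castSucc, Fin.castAdd, Fin.castLE]
  have eL : b (⟨d - 1, by omega⟩ : Fin (d+1)) = g ⟨d - 1, by omega⟩ := by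
    simp [hg, Fin.castSucc, Fin.castAdd, Fin.castLE]
  rw [e0, e1, eL]
  have key : ∀ c0 c1 c2 r : ℝ,
      (∀ v ∈ PhdVerts h d, c0 * (v ⟨0, by omega⟩ : ℝ) + c1 * (v ⟨1, by omega⟩ : ℝ)
        + c2 * (v ⟨d - 1, by omega⟩ : ℝ) ≤ r) →
      c0 * (g ⟨0, by omega⟩ : ℝ) + c1 * (g ⟨1, by omega⟩ : ℝ)
        + c2 * (g ⟨d - 1, by omega⟩ : ℝ) ≤ r := by
    intro c0 c1 c2 r hvall
    exact hull_ineq (PhdVerts h d) _ _ _ c0 c1 c2 r hvall (castPt g) hb2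
  refine ⟨?_, ?_, ?_, ?_, ?_, ?_⟩
  · have := key (-1) 0 0 0 (fun v hv => by
      have hz := (verts_ineqs hh hd hv).1
      have hr : (0 : ℝ) ≤ ((v ⟨0, by omega⟩ : ℤ) : ℝ) := by exact_mod_cast hz
      linarith)
    have hr : (0 : ℝ) ≤ ((g ⟨0, by omega⟩ : ℤ) : ℝ) := by linarith
    exact_mod_cast hr
  · have := key 1 0 0 1 (fun v hv => by
      have hz := (verts_ineqs hh hd hv).2.1
      have hr : ((v ⟨0, by omega⟩ : ℤ) : ℝ) ≤ 1 := by exact_mod_cast hz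
      linarith)
    have hr : ((g ⟨0, by omega⟩ : ℤ) : ℝ) ≤ 1 := by linarith
    exact_mod_cast hr
  · have := key 4 (-4) (-1) 0 (fun v hv => by
      have hz := (verts_ineqs hh hd hv).2.2.1
      have hr : 4 * ((v ⟨0, by omega⟩ : ℤ) : ℝ) ≤
          ((v ⟨d - 1, by omega⟩ : ℤ) : ℝ) + 4 * ((v ⟨1, by omega⟩ : ℤ) : ℝ) := by
        exact_mod_cast hz
      linarith)
    have hr : 4 * ((g ⟨0, by omega⟩ : ℤ) : ℝ) ≤
        ((g ⟨d - 1, by omega⟩ : ℤ) : ℝ) + 4 * ((g ⟨1, by omega⟩ : ℤ) : ℝ) := by linarith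
    exact_mod_cast hr
  · have := key (5 * ((h : ℝ) - 1)) 4 1 (5 * h) (fun v hv => by
      have hz := (verts_ineqs hh hd hv).2.2.2.1
      have hr : ((v ⟨d - 1, by omega⟩ : ℤ) : ℝ) + 4 * ((v ⟨1, by omega⟩ : ℤ) : ℝ)
          + 5 * ((h : ℝ) - 1) * ((v ⟨0, by omega⟩ : ℤ) : ℝ) ≤ 5 * (h : ℝ) := by
        exact_mod_cast hz
      linarith)
    have hr : ((g ⟨d - 1, by omega⟩ : ℤ) : ℝ) + 4 * ((g ⟨1, by omega⟩ : ℤ) : ℝ)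
        + 5 * ((h : ℝ) - 1) * ((g ⟨0, by omega⟩ : ℤ) : ℝ) ≤ 5 * (h : ℝ) := by linarith
    exact_mod_cast hr
  · have := key (-4) (-1) 1 1 (fun v hv => by
      have hz := (verts_ineqs hh hd hv).2.2.2.2.1
      have hr : ((v ⟨d - 1, by omega⟩ : ℤ) : ℝ) - ((v ⟨1, by omega⟩ : ℤ) : ℝ)
          - 4 * ((v ⟨0, by omega⟩ : ℤ) : ℝ) ≤ 1 := by exact_mod_cast hz
      linarith)
    have hr : ((g ⟨d - 1, by omega⟩ : ℤ) : ℝ) - ((g ⟨1, by omega⟩ : ℤ) : ℝ)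
        - 4 * ((g ⟨0, by omega⟩ : ℤ) : ℝ) ≤ 1 := by linarith
    exact_mod_cast hr
  · have := key 0 1 (-1) 1 (fun v hv => by
      have hz := (verts_ineqs hh hd hv).2.2.2.2.2
      have hr : ((v ⟨1, by omega⟩ : ℤ) : ℝ) - ((v ⟨d - 1, by omega⟩ : ℤ) : ℝ) ≤ 1 := by
        exact_mod_cast hz
      linarith)
    have hr : ((g ⟨1, by omega⟩ : ℤ) : ℝ) - ((g ⟨d - 1, by omega⟩ : ℤ) : ℝ) ≤ 1 := by linarith
    exact_mod_cast hr

lemma no_decomp {h : ℕ} (j a0 a1 aL b0 b1 bL : ℤ)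
    (Ia : Ineqs h a0 a1 aL) (Ib : Ineqs h b0 b1 bL)
    (e0 : a0 + b0 = 1) (e1 : a1 + b1 = j) (eL : aL + bL = j + 2) : False := by
  obtain ⟨ha0, ha1, hA, hB, hC, hD⟩ := Ia
  obtain ⟨hb0, hb1, hA', hB', hC', hD'⟩ := Ib
  rcases (by omega : a0 = 1 ∧ b0 = 0 ∨ a0 = 0 ∧ b0 = 1) with ⟨h1, h2⟩ | ⟨h1, h2⟩ <;>
      subst h1 <;> subst h2
  · have k1 : aL + 4 * a1 ≤ 5 := by linarith
    have k2 : 4 ≤ aL + 4 * a1 := by linarith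
    have k3 : bL - b1 ≤ 1 := by linarith
    have h5 : 1 ≤ 5 * a1 := by linarith
    have h6 : 5 * a1 ≤ 4 := by linarith
    omega
  · have k1 : bL + 4 * b1 ≤ 5 := by linarith
    have k2 : 4 ≤ bL + 4 * b1 := by linarith
    have k3 : aL - a1 ≤ 1 := by linarith
    have h5 : 1 ≤ 5 * b1 := by linarith
    have h6 : 5 * b1 ≤ 4 := by linarith
    omega

lemma app_castSucc {d : ℕ} (a : Fin d → ℤ) (c : ℤ) (i : Fin d) :
    app a c i.castSucc = a i := by simp [app]

lemma msum_apply {d : ℕ} (m : Multiset (Fin d → ℤ)) (k : Fin d) :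
    m.sum k = (m.map (fun y => y k)).sum := by
  induction m using Multiset.induction_on with
  | empty => simp
  | cons a s ih => simp [ih]

lemma ujp_coords {d : ℕ} (hd : 3 ≤ d) (j : ℤ) :
    ujp d j ⟨0, by omega⟩ = 1 ∧ ujp d j ⟨1, by omega⟩ = j ∧
      ujp d j ⟨d - 1, by omega⟩ = j + 2 := by
  simp only [ujp, Pi.add_apply, Pi.smul_apply, smul_eq_mul,
    eOne0 hd, eOne1 hd, eOneL hd, eMid0 hd, eMid1 hd, eMidL hd, eD0 hd, eD1 hd, eDL hd]
  constructor
  · ring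
  constructor
  · ring
  · ring

set_option maxHeartbeats 1000000 in
lemma part1 {h d : ℕ} (hh : 1 ≤ h) (hd : 3 ≤ d) :
    ∀ j : ℤ, 1 ≤ j → j ≤ (h : ℤ) →
      app (ujp d j) 2 ∉ AddSubmonoid.closure (APts (Phd h d)) := by
  intro j hj1 hj2 hmem
  have hrep : ∃ m : Multiset (Fin (d+1) → ℤ),
      (∀ y ∈ m, y ∈ APts (Phd h d)) ∧ m.sum = app (ujp d j) 2 := by
    refine AddSubmonoid.closure_induction
      (motive := fun x _ => ∃ m : Multiset (Fin (d+1) → ℤ),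
        (∀ y ∈ m, y ∈ APts (Phd h d)) ∧ m.sum = x) ?_ ?_ ?_ hmem
    · intro x hx; exact ⟨{x}, by simpa using hx, by simp⟩
    · exact ⟨0, by simp, by simp⟩
    · rintro x y _ _ ⟨m1, hm1, rfl⟩ ⟨m2, hm2, rfl⟩
      refine ⟨m1 + m2, ?_, by simp⟩
      intro y hy
      rcases Multiset.mem_add.1 hy with hy | hy
      · exact hm1 y hy
      · exact hm2 y hy
  obtain ⟨m, hmS, hmsum⟩ := hrep
  have hlast : ∀ y ∈ m, y (Fin.last d) = 1 := fun y hy => (hmS y hy).1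
  have hcard : Multiset.card m = 2 := by
    have h1 : m.sum (Fin.last d) = 2 := by
      rw [hmsum]; simp [app, Fin.snoc_last]
    rw [msum_apply] at h1
    have h2 : m.map (fun y => y (Fin.last d)) =
        Multiset.replicate (Multiset.card m) (1 : ℤ) := by
      rw [← Multiset.card_map (fun y => y (Fin.last d)) m]
      exact Multiset.eq_replicate_card.2 (by
        intro b hb
        obtain ⟨y, hy, rfl⟩ := Multiset.mem_map.1 hb
        exact hlast y hy)
    rw [h2, Multiset.sum_replicate, nsmul_eq_mul, mul_one] at h1
    exact_mod_cast h1
  obtain ⟨a, b, rfl⟩ := Multiset.card_eq_two.1 hcard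
  have hab : a + b = app (ujp d j) 2 := by simpa using hmsum
  have ha := hmS a (by simp)
  have hb := hmS b (by simp)
  have Ia := apts_ineqs hh hd ha
  have Ib := apts_ineqs hh hd hb
  have hsnoc : ∀ k : ℕ, (hk : k < d) →
      a ⟨k, by omega⟩ + b ⟨k, by omega⟩ = ujp d j ⟨k, hk⟩ := by
    intro k hk
    have h1 := congrFun hab (Fin.castSucc ⟨k, hk⟩)
    simp only [Pi.add_apply, app_castSucc] at h1
    exact h1
  obtain ⟨c0, c1, cL⟩ := ujp_coords hd j
  have e0 := (hsnoc 0 (by omega)).trans c0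
  have e1 := (hsnoc 1 (by omega)).trans c1
  have eL := (hsnoc (d - 1) (by omega)).trans cL
  exact no_decomp j _ _ _ _ _ _ Ia Ib e0 e1 eL

lemma vert_mem {h d : ℕ} {v : Fin d → ℤ} (hv : v ∈ PhdVerts h d) :
    app v 1 ∈ APts (Phd h d) := by
  constructor
  · simp [app, Fin.snoc_last]
  · have : (fun i : Fin d => app v 1 i.castSucc) = v := by
      funext i; simp [app, Fin.snoc_castSucc]
    rw [this]
    exact subset_convexHull ℝ _ (Set.mem_image_of_mem _ hv)

lemma group_identity {d : ℕ} (hd : 3 ≤ d) :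
    app (eOne d + eMid d + eD d) 1 + app (eD d) 1 + app (eD d) 1
      - app (0 : Fin d → ℤ) 1 = app (ujp d 1) 2 := by
  funext i
  refine Fin.lastCases ?_ ?_ i
  · simp [app, Fin.snoc_last]
  · intro k
    simp only [Pi.add_apply, Pi.sub_apply, app, Fin.snoc_castSucc, ujp,
      Pi.smul_apply, smul_eq_mul, eOne, eMid, eD, eV, Pi.zero_apply]
    split_ifs <;> omega

lemma cone_identity {d : ℕ} (hd : 3 ≤ d) :
    app (eOne d + (5 : ℤ) • eD d) 1 + app (eOne d + eMid d) 1 + app (eMid d) 1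
      + app (eD d) 1 = (2 : ℤ) • app (ujp d 1) 2 := by
  funext i
  refine Fin.lastCases ?_ ?_ i
  · simp [app, Fin.snoc_last]
  · intro k
    simp only [Pi.add_apply, Pi.smul_apply, smul_eq_mul, app, Fin.snoc_castSucc, ujp,
      eOne, eMid, eD, eV]
    split_ifs <;> omega

theorem stmt_7 (h d : ℕ) (hh : 1 ≤ h) (hd : 3 ≤ d) :
    (∀ j : ℤ, 1 ≤ j → j ≤ (h : ℤ) →
      app (ujp d j) 2 ∉ AddSubmonoid.closure (APts (Phd h d))) ∧
    {b : Fin (d+1) → ℤ | castPt b ∈ coneOf (castPt '' APts (Phd h d)) ∧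
        b ∈ AddSubgroup.closure (APts (Phd h d))} ≠
      (AddSubmonoid.closure (APts (Phd h d)) : Set (Fin (d+1) → ℤ)) := by
  constructor
  · exact part1 hh hd
  · intro heq
    have hXnot : app (ujp d 1) 2 ∉ AddSubmonoid.closure (APts (Phd h d)) :=
      part1 hh hd 1 le_rfl (by exact_mod_cast hh)
    have m8 : app (eOne d + (5 : ℤ) • eD d) 1 ∈ APts (Phd h d) :=
      vert_mem (Or.inl (by apply Set.mem_insert_of_mem; apply Set.mem_insert_of_mem; apply Set.mem_insert_of_mem; apply Set.mem_insert_of_mem; apply Set.mem_insert_of_mem; apply Set.mem_insert_of_mem; apply Set.mem_insert_of_mem; exact Set.mem_insert _ _))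
    have m9 : app (eOne d + eMid d) 1 ∈ APts (Phd h d) :=
      vert_mem (Or.inl (by apply Set.mem_insert_of_mem; apply Set.mem_insert_of_mem; apply Set.mem_insert_of_mem; apply Set.mem_insert_of_mem; apply Set.mem_insert_of_mem; apply Set.mem_insert_of_mem; apply Set.mem_insert_of_mem; apply Set.mem_insert_of_mem; exact Set.mem_insert _ _))
    have m3 : app (eMid d) 1 ∈ APts (Phd h d) :=
      vert_mem (Or.inl (by apply Set.mem_insert_of_mem; apply Set.mem_insert_of_mem; exact Set.mem_insert _ _))
    have m2 : app (eD d) 1 ∈ APts (Phd h d) :=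
      vert_mem (Or.inl (by apply Set.mem_insert_of_mem; exact Set.mem_insert _ _))
    have m10 : app (eOne d + eMid d + eD d) 1 ∈ APts (Phd h d) :=
      vert_mem (Or.inl (by apply Set.mem_insert_of_mem; apply Set.mem_insert_of_mem; apply Set.mem_insert_of_mem; apply Set.mem_insert_of_mem; apply Set.mem_insert_of_mem; apply Set.mem_insert_of_mem; apply Set.mem_insert_of_mem; apply Set.mem_insert_of_mem; apply Set.mem_insert_of_mem; exact rfl))
    have m0 : app (0 : Fin d → ℤ) 1 ∈ APts (Phd h d) :=
      vert_mem (Or.inl (by exact Set.mem_insert _ _))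
    have hcone : castPt (app (ujp d 1) 2) ∈ coneOf (castPt '' APts (Phd h d)) := by
      refine ⟨4, ![1/2, 1/2, 1/2, 1/2],
        ![castPt (app (eOne d + (5 : ℤ) • eD d) 1), castPt (app (eOne d + eMid d) 1),
          castPt (app (eMid d) 1), castPt (app (eD d) 1)], ?_, ?_, ?_⟩
      · intro i; fin_cases i <;> norm_num
      · intro i
        fin_cases i
        · exact ⟨_, m8, rfl⟩
        · exact ⟨_, m9, rfl⟩
        · exact ⟨_, m3, rfl⟩
        · exact ⟨_, m2, rfl⟩
      · rw [Fin.sum_univ_four]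
        simp only [Matrix.cons_val_zero, Matrix.cons_val_one, Matrix.head_cons,
          Matrix.cons_val_two, Matrix.tail_cons, Matrix.cons_val_three]
        funext i
        have hZ := congrFun (cone_identity hd) i
        simp only [Pi.add_apply, Pi.smul_apply, smul_eq_mul] at hZ
        simp only [castPt, Pi.add_apply, Pi.smul_apply, smul_eq_mul]
        have hR : ((app (eOne d + (5 : ℤ) • eD d) 1 i : ℤ) : ℝ)
            + ((app (eOne d + eMid d) 1 i : ℤ) : ℝ)
            + ((app (eMid d) 1 i : ℤ) : ℝ) + ((app (eD d) 1 i : ℤ) : ℝ)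
            = 2 * ((app (ujp d 1) 2 i : ℤ) : ℝ) := by exact_mod_cast hZ
        linarith
    have hgrp : app (ujp d 1) 2 ∈ AddSubgroup.closure (APts (Phd h d)) := by
      rw [← group_identity hd]
      exact sub_mem
        (add_mem (add_mem (AddSubgroup.subset_closure m10) (AddSubgroup.subset_closure m2))
          (AddSubgroup.subset_closure m2)) (AddSubgroup.subset_closure m0)
    have hset : app (ujp d 1) 2 ∈
        {b : Fin (d+1) → ℤ | castPt b ∈ coneOf (castPt '' APts (Phd h d)) ∧
          b ∈ AddSubgroup.closure (APts (Phd h d))} := ⟨hcone, hgrp⟩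
    rw [heq] at hset
    exact hXnot hset
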